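/- Let N ≥ 2, let {e_i}_{i=1}^N be the standard basis of ℝ^N, and let P := {±e_i : 1 ≤ i ≤ N} ∪ {±(e_i + e_j)/√2, ±(e_i − e_j)/√2 : 1 ≤ i < j ≤ N}. Then there exists C₀ > 0 such that for every C ≥ C₀ the set Ω₀ := ([−C, C]^N − e₁) ∪ ([−C−1, C+1]^N + e₁) (the union of the cube [−C, C]^N translated by −e₁ and the cube [−C−1, C+1]^N translated by +e₁) satisfies the reflection property (RP) with respect to P with parameter ρ = 1: Ψ_{Π_p(s)}(Ω₀) ∩ Π_p^−(s) ⊆ Ω₀ ∩ Π_p^−(s) for all p ∈ P and all s > 1. -/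

import Mathlib

open scoped RealInnerProductSpace
open Metric Set MeasureTheory

noncomputable section

abbrev E (N : ℕ) := EuclideanSpace ℝ (Fin N)

variable {N : ℕ}

/-- Reflection across the hyperplane `Π_p(s) = {x | x·p = s}`. -/
def reflect (p : E N) (s : ℝ) (x : E N) : E N := x - (2 * (⟪x, p⟫ - s)) • p

/-- Reflection across the hyperplane through the origin orthogonal to `p`. -/
def reflect0 (p : E N) : E N → E N := reflect p 0

/-- A finite root system of unit vectors. -/
def IsRootSystem (P : Set (E N)) : Prop :=
  P.Finite ∧ (∀ p ∈ P, ‖p‖ = 1) ∧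
  (∀ p ∈ P, {q | q ∈ P ∧ ∃ c : ℝ, q = c • p} = {p, -p}) ∧
  (∀ p ∈ P, reflect0 p '' P = P)

/-- Condition (EA): for every hyperplane through the origin (with normal `v ≠ 0`),
the part of `P` outside the hyperplane spans `ℝ^N`. -/
def CondEA (P : Set (E N)) : Prop :=
  ∀ v : E N, v ≠ 0 → Submodule.span ℝ {p | p ∈ P ∧ ⟪p, v⟫ ≠ 0} = ⊤

/-- The reflection property (RP) with respect to `P` and `ρ`. -/
def ReflProp (P : Set (E N)) (ρ : ℝ) (Ω : Set (E N)) : Prop :=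
  ∀ p ∈ P, ∀ s > ρ,
    reflect p s '' Ω ∩ {x | ⟪x, p⟫ < s} ⊆ Ω ∩ {x | ⟪x, p⟫ < s}

/-- `v` enumerates a basis of `ℝ^N` consisting of elements of `P`. -/
def BasisIn (P : Set (E N)) (v : Fin N → E N) : Prop :=
  (∀ i, v i ∈ P) ∧ LinearIndependent ℝ v ∧ Submodule.span ℝ (Set.range v) = ⊤

/-- The open cone `Co_r(A)` generated by a basis. -/
def Cone (r : ℝ) (v : Fin N → E N) : Set (E N) :=
  {x | ∃ a : Fin N → ℝ, (∀ i, 0 < a i) ∧ (∑ i, a i) < r ∧ x = ∑ i, a i • v i}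

/-- `σ₁(P)`. -/
def sigma1 (P : Set (E N)) : ℝ :=
  sInf {s | ∃ p₁ ∈ P, s = sSup {t | ∃ v : Fin N → E N, BasisIn P v ∧
    t = sInf (Set.range fun i => |⟪v i, p₁⟫|)}}

/-- `σ₂(P)`. -/
def sigma2 (P : Set (E N)) : ℝ :=
  sSup {t | ∃ x : E N, (∀ p ∈ P, |⟪p, x⟫| ≤ 1) ∧ t = ‖x‖}

/-- `σ₃(P)`. -/
def sigma3 (P : Set (E N)) : ℝ :=
  sInf {s | ∃ v : Fin N → E N, BasisIn P v ∧
    s = sSup {r | 0 < r ∧ ball ((1 / (2 * (N : ℝ))) • ∑ i, v i) r ⊆ Cone 1 v}}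

/-- The root system `{±e_i} ∪ {±(e_i ± e_j)/√2 : i < j}`. -/
def Psq (N : ℕ) : Set (E N) :=
  {p | ∃ i : Fin N, p = EuclideanSpace.single i (1 : ℝ) ∨
        p = -EuclideanSpace.single i (1 : ℝ)} ∪
  {p | ∃ i j : Fin N, i < j ∧
        (p = (Real.sqrt 2)⁻¹ •
            (EuclideanSpace.single i (1 : ℝ) + EuclideanSpace.single j (1 : ℝ)) ∨
         p = -((Real.sqrt 2)⁻¹ •
            (EuclideanSpace.single i (1 : ℝ) + EuclideanSpace.single j (1 : ℝ))) ∨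
         p = (Real.sqrt 2)⁻¹ •
            (EuclideanSpace.single i (1 : ℝ) - EuclideanSpace.single j (1 : ℝ)) ∨
         p = -((Real.sqrt 2)⁻¹ •
            (EuclideanSpace.single i (1 : ℝ) - EuclideanSpace.single j (1 : ℝ))))}

/-- The union of the cube `[−C,C]^N` translated by `−e₁` and the cube
`[−C−1,C+1]^N` translated by `+e₁`. -/
def twoCubes (N : ℕ) (hN : 2 ≤ N) (C : ℝ) : Set (E N) :=
  {x | ∀ i : Fin N, |(x + EuclideanSpace.single (⟨0, by omega⟩ : Fin N) (1 : ℝ)) i| ≤ C} ∪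
  {x | ∀ i : Fin N, |(x - EuclideanSpace.single (⟨0, by omega⟩ : Fin N) (1 : ℝ)) i| ≤ C + 1}

lemma reflect0_neg (p : E N) : reflect0 (-p) = reflect0 p := by
  funext x; simp [reflect0, reflect, inner_neg_right, smul_neg]

lemma inner_single_self (i : Fin N) :
    ⟪(EuclideanSpace.single i (1:ℝ) : E N), EuclideanSpace.single i (1:ℝ)⟫ = 1 := by
  simp [EuclideanSpace.inner_single_left, EuclideanSpace.single_apply]

lemma sym_single (i : Fin N) (a : ℝ) (z : E N) (hz : ∀ m, |z m| ≤ a) (k : Fin N) :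
    |reflect0 (EuclideanSpace.single i (1:ℝ)) z k| ≤ a := by
  have h : reflect0 (EuclideanSpace.single i (1:ℝ)) z k
      = z k - (2*(z i - 0)) * (if k = i then 1 else 0) := by
    show z k - (2*(⟪z, _⟫ - 0)) * _ = _
    rw [EuclideanSpace.inner_single_right]
    change _ - _ * (EuclideanSpace.single i (1:ℝ) : E N) k = _
    rw [EuclideanSpace.single_apply]
    push_cast
    simp only [starRingEnd_apply, star_trivial]
    ring
  rw [h]
  by_cases hk : k = i
  · rw [if_pos hk, hk]
    have h' : z i - 2 * (z i - 0) * 1 = -(z i) := by ring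
    rw [h', abs_neg]; exact hz i
  · rw [if_neg hk]
    simpa using hz k

lemma inner_pm_self (i j : Fin N) (hij : i ≠ j) (ε : ℝ) (hε : ε = 1 ∨ ε = -1) :
    ⟪((Real.sqrt 2)⁻¹ • (EuclideanSpace.single i (1:ℝ) + ε • EuclideanSpace.single j (1:ℝ)) : E N),
      (Real.sqrt 2)⁻¹ • (EuclideanSpace.single i (1:ℝ) + ε • EuclideanSpace.single j (1:ℝ))⟫ = 1 := by
  have h2 : (Real.sqrt 2) * (Real.sqrt 2) = 2 := Real.mul_self_sqrt (by norm_num)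
  have hε2 : ε * ε = 1 := by rcases hε with h | h <;> simp [h]
  rw [real_inner_smul_left, real_inner_smul_right, inner_add_left, inner_add_right,
    inner_add_right, real_inner_smul_left, real_inner_smul_right, real_inner_smul_left,
    real_inner_smul_right, inner_single_self, inner_single_self]
  have h0 : ⟪(EuclideanSpace.single i (1:ℝ) : E N), EuclideanSpace.single j (1:ℝ)⟫ = 0 := by
    simp [EuclideanSpace.inner_single_left, EuclideanSpace.single_apply, hij, hij.symm]
  have h0' : ⟪(EuclideanSpace.single j (1:ℝ) : E N), EuclideanSpace.single i (1:ℝ)⟫ = 0 := by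
    simp [EuclideanSpace.inner_single_left, EuclideanSpace.single_apply, hij, hij.symm]
  rw [h0, h0']
  have : (Real.sqrt 2)⁻¹ * (Real.sqrt 2)⁻¹ = 2⁻¹ := by
    rw [← mul_inv]; rw [h2]
  field_simp
  nlinarith [h2]

lemma sym_pm (i j : Fin N) (hij : i ≠ j) (ε : ℝ) (hε : ε = 1 ∨ ε = -1) (a : ℝ) (z : E N)
    (hz : ∀ m, |z m| ≤ a) (k : Fin N) :
    |reflect0 ((Real.sqrt 2)⁻¹ •
      (EuclideanSpace.single i (1:ℝ) + ε • EuclideanSpace.single j (1:ℝ))) z k| ≤ a := by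
  have h2 : Real.sqrt 2 * Real.sqrt 2 = 2 := Real.mul_self_sqrt (by norm_num)
  have hinv : (Real.sqrt 2)⁻¹ * (Real.sqrt 2)⁻¹ * 2 = 1 := by
    have hne : Real.sqrt 2 ≠ 0 := by positivity
    field_simp
    rw [Real.sq_sqrt (by norm_num)]
  set p : E N := (Real.sqrt 2)⁻¹ •
      (EuclideanSpace.single i (1:ℝ) + ε • EuclideanSpace.single j (1:ℝ)) with hp
  have hzp : ⟪z, p⟫ = (Real.sqrt 2)⁻¹ * (z i + ε * z j) := by
    rw [hp, real_inner_smul_right, inner_add_right, real_inner_smul_right,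
      EuclideanSpace.inner_single_right, EuclideanSpace.inner_single_right]
    simp only [starRingEnd_apply, star_trivial]
    ring
  have hpk : ∀ m : Fin N,
      p m = (Real.sqrt 2)⁻¹ * ((if m = i then 1 else 0) + ε * (if m = j then 1 else 0)) := by
    intro m
    show (Real.sqrt 2)⁻¹ * ((EuclideanSpace.single i (1:ℝ)) m
        + ε * (EuclideanSpace.single j (1:ℝ)) m) = _
    rw [EuclideanSpace.single_apply, EuclideanSpace.single_apply]
  have h : reflect0 p z k = z k - (z i + ε * z j) *
      ((if k = i then 1 else 0) + ε * (if k = j then 1 else 0)) := by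
    show z k - (2*(⟪z, p⟫ - 0)) * (p k) = _
    rw [hzp, hpk]
    linear_combination (-(z i + ε * z j) *
      ((if k = i then (1:ℝ) else 0) + ε * (if k = j then 1 else 0))) * hinv
  rw [h]
  rcases hε with rfl | rfl
  · by_cases hk : k = i
    · have hkj : ¬ k = j := by rw [hk]; exact hij
      rw [if_pos hk, if_neg hkj, hk]
      have e1 : z i - (z i + 1 * z j) * (1 + 1 * 0) = -(z j) := by ring
      rw [e1, abs_neg]; exact hz j
    · by_cases hk' : k = j
      · rw [if_neg hk, if_pos hk', hk']
        have e1 : z j - (z i + 1 * z j) * (0 + 1 * 1) = -(z i) := by ring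
        rw [e1, abs_neg]; exact hz i
      · rw [if_neg hk, if_neg hk']
        have e1 : z k - (z i + 1 * z j) * (0 + 1 * 0) = z k := by ring
        rw [e1]; exact hz k
  · by_cases hk : k = i
    · have hkj : ¬ k = j := by rw [hk]; exact hij
      rw [if_pos hk, if_neg hkj, hk]
      have e1 : z i - (z i + (-1) * z j) * (1 + (-1) * 0) = z j := by ring
      rw [e1]; exact hz j
    · by_cases hk' : k = j
      · rw [if_neg hk, if_pos hk', hk']
        have e1 : z j - (z i + (-1) * z j) * (0 + (-1) * 1) = z i := by ring
        rw [e1]; exact hz i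
      · rw [if_neg hk, if_neg hk']
        have e1 : z k - (z i + (-1) * z j) * (0 + (-1) * 0) = z k := by ring
        rw [e1]; exact hz k

lemma abs_convex_step {a : ℝ} {u w t T : ℝ} (ht : 0 ≤ t) (htT : t ≤ T)
    (hu : |u| ≤ a) (hz : |u - 2 * T * w| ≤ a) : |u - 2 * t * w| ≤ a := by
  rcases eq_or_lt_of_le (le_trans ht htT) with hT | hT
  · have ht0 : t = 0 := le_antisymm (by linarith) ht
    rw [ht0]; simpa using hu
  · rcases abs_le.1 hu with ⟨h1, h2⟩
    rcases abs_le.1 hz with ⟨h3, h4⟩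
    rw [abs_le]
    constructor
    · nlinarith [mul_nonneg (sub_nonneg.2 htT) (by linarith : (0:ℝ) ≤ u + a),
        mul_nonneg ht (by linarith : (0:ℝ) ≤ u - 2 * T * w + a)]
    · nlinarith [mul_nonneg (sub_nonneg.2 htT) (by linarith : (0:ℝ) ≤ a - u),
        mul_nonneg ht (by linarith : (0:ℝ) ≤ a - (u - 2 * T * w))]

lemma cube_step {a s : ℝ} (p c x : E N) (hpp : ⟪p, p⟫ = 1)
    (hsym : ∀ z : E N, (∀ m, |z m| ≤ a) → ∀ k, |reflect0 p z k| ≤ a)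
    (hcp : ⟪c, p⟫ ≤ s) (hx : ∀ m, |(x - c) m| ≤ a) (hxs : s ≤ ⟪x, p⟫) (k : Fin N) :
    |(reflect p s x - c) k| ≤ a := by
  have hz := hsym (x - c) hx k
  have hT : ⟪x - c, p⟫ = ⟪x, p⟫ - ⟪c, p⟫ := by rw [inner_sub_left]
  have h1 : (reflect p s x - c) k = (x - c) k - 2 * (⟪x, p⟫ - s) * p k := by
    show x k - (2 * (⟪x, p⟫ - s)) * p k - c k = x k - c k - 2 * (⟪x, p⟫ - s) * p k
    ring
  have h2 : reflect0 p (x - c) k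
      = (x - c) k - 2 * (⟪x, p⟫ - ⟪c, p⟫) * p k := by
    show (x - c) k - (2 * (⟪x - c, p⟫ - 0)) * p k = _
    rw [hT]; ring
  rw [h1]
  rw [h2] at hz
  exact abs_convex_step (by linarith) (by linarith) (hx k) hz

lemma root_facts {p : E N} (hp : p ∈ Psq N) :
    ⟪p, p⟫ = 1 ∧ ∀ (a : ℝ) (z : E N), (∀ m, |z m| ≤ a) → ∀ k, |reflect0 p z k| ≤ a := by
  rcases hp with ⟨i, hi | hi⟩ | ⟨i, j, hij, h | h | h | h⟩
  · subst hi
    exact ⟨inner_single_self i, fun a z hz k => sym_single i a z hz k⟩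
  · subst hi
    refine ⟨by rw [inner_neg_neg]; exact inner_single_self i, fun a z hz k => ?_⟩
    rw [reflect0_neg]; exact sym_single i a z hz k
  · subst h
    have e1 : (EuclideanSpace.single i (1:ℝ) + EuclideanSpace.single j (1:ℝ) : E N)
        = EuclideanSpace.single i (1:ℝ) + (1:ℝ) • EuclideanSpace.single j (1:ℝ) := by
      rw [one_smul]
    rw [e1]
    exact ⟨inner_pm_self i j hij.ne 1 (Or.inl rfl),
      fun a z hz k => sym_pm i j hij.ne 1 (Or.inl rfl) a z hz k⟩
  · subst h
    have e1 : (EuclideanSpace.single i (1:ℝ) + EuclideanSpace.single j (1:ℝ) : E N)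
        = EuclideanSpace.single i (1:ℝ) + (1:ℝ) • EuclideanSpace.single j (1:ℝ) := by
      rw [one_smul]
    rw [e1]
    refine ⟨by rw [inner_neg_neg]; exact inner_pm_self i j hij.ne 1 (Or.inl rfl),
      fun a z hz k => ?_⟩
    rw [reflect0_neg]; exact sym_pm i j hij.ne 1 (Or.inl rfl) a z hz k
  · subst h
    have e1 : (EuclideanSpace.single i (1:ℝ) - EuclideanSpace.single j (1:ℝ) : E N)
        = EuclideanSpace.single i (1:ℝ) + (-1:ℝ) • EuclideanSpace.single j (1:ℝ) := by
      rw [neg_one_smul]; exact sub_eq_add_neg _ _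
    rw [e1]
    exact ⟨inner_pm_self i j hij.ne (-1) (Or.inr rfl),
      fun a z hz k => sym_pm i j hij.ne (-1) (Or.inr rfl) a z hz k⟩
  · subst h
    have e1 : (EuclideanSpace.single i (1:ℝ) - EuclideanSpace.single j (1:ℝ) : E N)
        = EuclideanSpace.single i (1:ℝ) + (-1:ℝ) • EuclideanSpace.single j (1:ℝ) := by
      rw [neg_one_smul]; exact sub_eq_add_neg _ _
    rw [e1]
    refine ⟨by rw [inner_neg_neg]; exact inner_pm_self i j hij.ne (-1) (Or.inr rfl),
      fun a z hz k => ?_⟩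
    rw [reflect0_neg]; exact sym_pm i j hij.ne (-1) (Or.inr rfl) a z hz k

/-- for all sufficiently large `C`, the union of the two cubes
satisfies the reflection property with respect to `Psq N` and `ρ = 1`. -/
theorem twoCubes_reflProp (N : ℕ) (hN : 2 ≤ N) :
    ∃ C₀ > 0, ∀ C ≥ C₀, ReflProp (Psq N) 1 (twoCubes N hN C) := by
  refine ⟨1, one_pos, fun C _hC => ?_⟩
  intro p hp s hs y hy
  obtain ⟨⟨x, hxΩ, rfl⟩, hylt⟩ := hy
  obtain ⟨hpp, hsym⟩ := root_facts hp
  refine ⟨?_, hylt⟩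
  have hpn : ‖p‖ = 1 := by
    have h := real_inner_self_eq_norm_sq p
    rw [hpp] at h
    exact (pow_left_inj₀ (norm_nonneg p) zero_le_one two_ne_zero).mp
      (by rw [← h]; norm_num)
  have hrefl : ⟪reflect p s x, p⟫ = 2 * s - ⟪x, p⟫ := by
    show ⟪x - (2 * (⟪x, p⟫ - s)) • p, p⟫ = _
    rw [inner_sub_left, real_inner_smul_left, hpp]; ring
  have hylt' : ⟪reflect p s x, p⟫ < s := hylt
  rw [hrefl] at hylt'
  have hxs : s ≤ ⟪x, p⟫ := by linarith
  set i0 : Fin N := ⟨0, by omega⟩ with hi0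
  have hep : |⟪(EuclideanSpace.single i0 (1:ℝ) : E N), p⟫| ≤ 1 := by
    have h := abs_real_inner_le_norm (EuclideanSpace.single i0 (1:ℝ) : E N) p
    rw [hpn] at h
    simpa using h
  have hep' := abs_le.1 hep
  simp only [twoCubes, Set.mem_union, Set.mem_setOf_eq] at hxΩ ⊢
  rcases hxΩ with hx | hx
  · left
    intro k
    have hcp : ⟪(-(EuclideanSpace.single i0 (1:ℝ)) : E N), p⟫ ≤ s := by
      rw [inner_neg_left]; linarith [hep'.1, hs]
    have hx' : ∀ m, |(x - -(EuclideanSpace.single i0 (1:ℝ))) m| ≤ C := fun m => by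
      rw [sub_neg_eq_add]; exact hx m
    have h := cube_step p (-(EuclideanSpace.single i0 (1:ℝ))) x hpp (hsym C) hcp hx' hxs k
    rw [sub_neg_eq_add] at h
    exact h
  · right
    intro k
    have hcp : ⟪(EuclideanSpace.single i0 (1:ℝ) : E N), p⟫ ≤ s := by
      linarith [hep'.2, hs]
    exact cube_step p (EuclideanSpace.single i0 (1:ℝ)) x hpp (hsym (C + 1)) hcp hx hxs k
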